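/- Let f be a strictly convex generator with f(1)=0 and let π_ref be a full-support reference policy and λ ≥ 0. Let π* be an optimal f-regularized policy (i.e., V^{π*}_λ(s) = V*_λ(s) for all s). Then for any policy π with full support: V*_λ(ρ) − V^π_λ(ρ) = (1/(1−γ)) ∑_{s∈S} d^{π*}_ρ(s)·[ ∑_{a∈A} π*(a|s)·Q^π_λ(s,a) − λ·D_f(π*(·|s)‖π_ref(·|s)) − V^π_λ(s) ], where Q^π_λ(s,a) := r(s,a) + γ∑_{s'}P(s'|s,a)V^π_λ(s'). -/

import Mathlib

open Finset Filter MeasureTheory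

noncomputable section

/-- A probability distribution on a finite set. -/
def IsProbDist {A : Type*} [Fintype A] (ν : A → ℝ) : Prop :=
  (∀ a, 0 ≤ ν a) ∧ ∑ a, ν a = 1

/-- The f-divergence between two distributions on a finite set. -/
def fDiv {A : Type*} [Fintype A] (f : ℝ → ℝ) (ν q : A → ℝ) : ℝ :=
  ∑ a, q a * f (ν a / q a)

/-- `ν` is the (unique) maximizer of `⟨·,x⟩ - D_f(·‖q)` over probability distributions. -/
def IsSoftargmax {A : Type*} [Fintype A] (f : ℝ → ℝ) (q x ν : A → ℝ) : Prop :=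
  IsProbDist ν ∧
  (∀ m : A → ℝ, IsProbDist m →
    (∑ a, m a * x a) - fDiv f m q ≤ (∑ a, ν a * x a) - fDiv f ν q) ∧
  (∀ m : A → ℝ, IsProbDist m →
    (∑ a, m a * x a) - fDiv f m q = (∑ a, ν a * x a) - fDiv f ν q → m = ν)

/-- Assumption A_f(ρ̲) on the divergence generator `f`, with constants `ωf`, `κf`, `ιf`:
(i) boundedness, strict convexity, `f 1 = 0`, three-times differentiability;
(ii) `f' → -∞` at `0⁺` and `|f'/f''|` bounded near `0⁺`;
(iii) `1/(u f'' u) ≤ ωf` and `|f''' u / (f'' u)²| ≤ κf` on `(0, 1/ρ̲]`;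
(iv) `f''` decreasing on `(0, ιf]` and dominated by `f'' ιf` on `[ιf, 1/ρ̲]`. -/
def AF (f : ℝ → ℝ) (ρb ωf κf ιf : ℝ) : Prop :=
  (∃ C : ℝ, ∀ u ∈ Set.Icc (0:ℝ) (1/ρb), |f u| ≤ C) ∧
  StrictConvexOn ℝ (Set.Icc (0:ℝ) (1/ρb)) f ∧
  f 1 = 0 ∧
  (∀ u ∈ Set.Ioo (0:ℝ) (1/ρb),
    DifferentiableAt ℝ f u ∧ DifferentiableAt ℝ (deriv f) u ∧
      DifferentiableAt ℝ (deriv (deriv f)) u) ∧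
  Tendsto (deriv f) (nhdsWithin 0 (Set.Ioi 0)) atBot ∧
  (∃ M : ℝ, ∀ᶠ u in nhdsWithin (0:ℝ) (Set.Ioi 0), |deriv f u / deriv (deriv f) u| ≤ M) ∧
  1 ≤ ωf ∧ 0 < κf ∧
  (∀ u ∈ Set.Ioc (0:ℝ) (1/ρb),
    1 / (u * deriv (deriv f) u) ≤ ωf ∧
      |deriv (deriv (deriv f)) u / (deriv (deriv f) u) ^ 2| ≤ κf) ∧
  (0 < ιf ∧ ιf ≤ 1) ∧
  (∀ u v : ℝ, 0 < u → u ≤ v → v ≤ ιf → deriv (deriv f) v ≤ deriv (deriv f) u) ∧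
  (∀ u : ℝ, ιf ≤ u → u ≤ 1/ρb → deriv (deriv f) u ≤ deriv (deriv f) ιf)

/-- A policy: a probability distribution over actions for each state. -/
def IsPolicy {S A : Type*} [Fintype A] (π : S → A → ℝ) : Prop := ∀ s, IsProbDist (π s)

/-- `V` is the f-regularized value function of `π` (Bellman fixed point). -/
def IsRegValue {S A : Type*} [Fintype S] [Fintype A] (P : S → A → S → ℝ) (r : S → A → ℝ)
    (γ lam : ℝ) (f : ℝ → ℝ) (pref : S → A → ℝ) (π : S → A → ℝ) (V : S → ℝ) : Prop :=
  ∀ s, V s = (∑ a, π s a * r s a) - lam * fDiv f (π s) (pref s)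
      + γ * ∑ a, π s a * ∑ s', P s a s' * V s'

/-- `Vstar` is the optimal f-regularized value function: it is attained by some policy and
dominates (statewise) the regularized value of every policy. -/
def IsOptRegValue {S A : Type*} [Fintype S] [Fintype A] (P : S → A → S → ℝ) (r : S → A → ℝ)
    (γ lam : ℝ) (f : ℝ → ℝ) (pref : S → A → ℝ) (Vstar : S → ℝ) : Prop :=
  (∃ πopt, IsPolicy πopt ∧ IsRegValue P r γ lam f pref πopt Vstar) ∧
  (∀ π V, IsPolicy π → IsRegValue P r γ lam f pref π V → ∀ s, V s ≤ Vstar s)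

/-- Discounted state-occupancy measure `d^π_ρ(s) = (1-γ) ∑_t γ^t (ρᵀ P_π^t)(s)`. -/
def dOcc {S A : Type*} [Fintype S] [Fintype A] (P : S → A → S → ℝ) (γ : ℝ)
    (ρ : S → ℝ) (π : S → A → ℝ) (s : S) : ℝ :=
  (1 - γ) * ∑' t : ℕ,
    γ ^ t * ((fun (m : S → ℝ) (s' : S) => ∑ u, m u * ∑ a, π u a * P u a s')^[t] ρ) s

/-- `S_θ(s)` from the paper, written for a policy `π`. -/
def Sval {S A : Type*} [Fintype A] (f : ℝ → ℝ) (pref : S → A → ℝ) (π : S → A → ℝ)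
    (s : S) : ℝ :=
  ∑ a, pref s a / deriv (deriv f) (π s a / pref s a)

/-- The normalized weights `W_θ(a|s)` from the paper, written for a policy `π`. -/
def Wval {S A : Type*} [Fintype A] (f : ℝ → ℝ) (pref : S → A → ℝ) (π : S → A → ℝ)
    (s : S) (a : A) : ℝ :=
  (pref s a / deriv (deriv f) (π s a / pref s a)) / Sval f pref π s

/-- The regularized Q-function `Q(s,a) = r(s,a) + γ ∑_{s'} P(s'|s,a) V(s')`. -/
def Qval {S A : Type*} [Fintype S] [Fintype A] (P : S → A → S → ℝ) (r : S → A → ℝ)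
    (γ : ℝ) (V : S → ℝ) (s : S) (a : A) : ℝ :=
  r s a + γ * ∑ s', P s a s' * V s'

theorem stmt17 {S A : Type*} [Fintype S] [Fintype A] [Nonempty S] [Nonempty A]
    (γ : ℝ) (hγ : γ ∈ Set.Ioo (0:ℝ) 1)
    (P : S → A → S → ℝ) (hP : ∀ s a, IsProbDist (P s a))
    (r : S → A → ℝ) (hr : ∀ s a, r s a ∈ Set.Icc (0:ℝ) 1)
    (ρ : S → ℝ) (hρ : IsProbDist ρ)
    (f : ℝ → ℝ) (hconv : StrictConvexOn ℝ (Set.Ioi (0:ℝ)) f) (hf1 : f 1 = 0)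
    (pref : S → A → ℝ) (hpref : IsPolicy pref) (hpreffull : ∀ s a, 0 < pref s a)
    (lam : ℝ) (hlam : 0 ≤ lam)
    (Vstar : S → ℝ) (hVstarOpt : IsOptRegValue P r γ lam f pref Vstar)
    (πstar : S → A → ℝ) (hπstar : IsPolicy πstar)
    (hπstarVal : IsRegValue P r γ lam f pref πstar Vstar)
    (π : S → A → ℝ) (hπ : IsPolicy π) (hπfull : ∀ s a, 0 < π s a)
    (Vπ : S → ℝ) (hVπ : IsRegValue P r γ lam f pref π Vπ) :
    (∑ s, ρ s * Vstar s) - (∑ s, ρ s * Vπ s) =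
      (1 / (1 - γ)) * ∑ s, dOcc P γ ρ πstar s *
        ((∑ a, πstar s a * Qval P r γ Vπ s a) -
          lam * fDiv f (πstar s) (pref s) - Vπ s) := by
  obtain ⟨hγ0, hγ1⟩ := hγ
  have hγpos : (0:ℝ) < 1 - γ := by linarith
  set T : (S → ℝ) → S → ℝ :=
    fun m s' => ∑ u, m u * ∑ a, πstar u a * P u a s' with hTdef
  set μ : ℕ → S → ℝ := fun t => T^[t] ρ with hμdef
  set g : S → ℝ := fun s => Vstar s - Vπ s with hgdef
  set Δ : S → ℝ := fun s =>
    (∑ a, πstar s a * Qval P r γ Vπ s a) - lam * fDiv f (πstar s) (pref s) - Vπ s with hΔdef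
  -- μ t is a probability distribution
  have hμP : ∀ t, IsProbDist (μ t) := by
    intro t
    induction t with
    | zero => simpa [hμdef] using hρ
    | succ n ih =>
      have hstep : μ (n+1) = T (μ n) := by
        simp [hμdef, Function.iterate_succ_apply']
      rw [hstep]
      refine ⟨fun s' => Finset.sum_nonneg fun u _ => mul_nonneg (ih.1 u)
        (Finset.sum_nonneg fun a _ => mul_nonneg ((hπstar u).1 a) ((hP u a).1 s')), ?_⟩
      have key : ∀ u, ∑ s', μ n u * ∑ a, πstar u a * P u a s' = μ n u := by
        intro u
        rw [← Finset.mul_sum, Finset.sum_comm]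
        have : ∀ a, ∑ s', πstar u a * P u a s' = πstar u a := by
          intro a; rw [← Finset.mul_sum, (hP u a).2, mul_one]
        rw [Finset.sum_congr rfl fun a _ => this a, (hπstar u).2, mul_one]
      calc ∑ s', T (μ n) s' = ∑ u, ∑ s', μ n u * ∑ a, πstar u a * P u a s' := by
            rw [Finset.sum_comm]
        _ = ∑ u, μ n u := Finset.sum_congr rfl fun u _ => key u
        _ = 1 := ih.2
  have hμ0 : ∀ t s, 0 ≤ μ t s := fun t s => (hμP t).1 s
  have hμ1 : ∀ t s, μ t s ≤ 1 := by
    intro t s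
    calc μ t s ≤ ∑ s', μ t s' := Finset.single_le_sum (fun s' _ => hμ0 t s') (Finset.mem_univ s)
    _ = 1 := (hμP t).2
  have hgeo : Summable (fun t : ℕ => γ ^ t) :=
    summable_geometric_of_lt_one (le_of_lt hγ0) hγ1
  have hγt0 : ∀ t : ℕ, (0:ℝ) ≤ γ ^ t := fun t => pow_nonneg (le_of_lt hγ0) t
  -- key per-state identity for Δ
  have hΔeq : ∀ s, Δ s = g s - γ * ∑ a, πstar s a * ∑ s', P s a s' * g s' := by
    intro s
    have hb := hπstarVal s
    have h1 : ∑ a, πstar s a * Qval P r γ Vπ s a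
        = (∑ a, πstar s a * r s a) + γ * ∑ a, πstar s a * ∑ s', P s a s' * Vπ s' := by
      simp only [Qval, mul_add, Finset.sum_add_distrib, Finset.mul_sum]
      congr 1
      refine Finset.sum_congr rfl fun a _ => Finset.sum_congr rfl fun s' _ => by ring
    have h2 : ∑ a, πstar s a * ∑ s', P s a s' * g s'
        = (∑ a, πstar s a * ∑ s', P s a s' * Vstar s')
          - ∑ a, πstar s a * ∑ s', P s a s' * Vπ s' := by
      simp only [hgdef, mul_sub, Finset.sum_sub_distrib]
    simp only [hΔdef, hgdef]
    rw [h1, h2]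
    linear_combination -hb
  set c : ℕ → ℝ := fun t => γ ^ t * ∑ s, μ t s * g s with hcdef
  have habs : ∀ (t : ℕ) (h : S → ℝ), |∑ s, μ t s * h s| ≤ ∑ s, |h s| := by
    intro t h
    calc |∑ s, μ t s * h s| ≤ ∑ s, |μ t s * h s| := Finset.abs_sum_le_sum_abs _ _
      _ ≤ ∑ s, |h s| := by
        refine Finset.sum_le_sum fun s _ => ?_
        rw [abs_mul, abs_of_nonneg (hμ0 t s)]
        nlinarith [abs_nonneg (h s), hμ1 t s, hμ0 t s]
  set G : ℝ := ∑ s, |g s| with hGdef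
  have hG0 : 0 ≤ G := Finset.sum_nonneg fun s _ => abs_nonneg _
  have hcbd : ∀ t, |c t| ≤ G * γ ^ t := by
    intro t
    rw [hcdef]
    simp only
    rw [abs_mul, abs_pow, abs_of_nonneg (le_of_lt hγ0), mul_comm]
    exact mul_le_mul_of_nonneg_right (habs t g) (hγt0 t)
  -- the per-time-step telescoping identity
  have hkey : ∀ t : ℕ, ∑ s, γ ^ t * μ t s * Δ s = c t - c (t+1) := by
    intro t
    have hinner : ∑ s, μ t s * ∑ a, πstar s a * ∑ s', P s a s' * g s'
        = ∑ s', μ (t+1) s' * g s' := by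
      have hstep : μ (t+1) = T (μ t) := by
        simp [hμdef, Function.iterate_succ_apply']
      rw [hstep]
      simp only [hTdef]
      calc ∑ s, μ t s * ∑ a, πstar s a * ∑ s', P s a s' * g s'
          = ∑ s, ∑ a, ∑ s', μ t s * (πstar s a * (P s a s' * g s')) := by
            simp only [Finset.mul_sum]
        _ = ∑ s, ∑ s', ∑ a, μ t s * (πstar s a * (P s a s' * g s')) :=
            Finset.sum_congr rfl fun s _ => Finset.sum_comm
        _ = ∑ s', ∑ s, ∑ a, μ t s * (πstar s a * (P s a s' * g s')) := Finset.sum_comm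
        _ = ∑ s', (∑ s, μ t s * ∑ a, πstar s a * P s a s') * g s' := by
            refine Finset.sum_congr rfl fun s' _ => ?_
            rw [Finset.sum_mul]
            refine Finset.sum_congr rfl fun s _ => ?_
            rw [Finset.mul_sum, Finset.sum_mul]
            exact Finset.sum_congr rfl fun a _ => by ring
    calc ∑ s, γ ^ t * μ t s * Δ s
        = γ ^ t * ∑ s, μ t s * (g s - γ * ∑ a, πstar s a * ∑ s', P s a s' * g s') := by
          rw [Finset.mul_sum]
          exact Finset.sum_congr rfl fun s _ => by rw [hΔeq s]; ring
      _ = γ ^ t * ((∑ s, μ t s * g s)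
            - γ * ∑ s, μ t s * ∑ a, πstar s a * ∑ s', P s a s' * g s') := by
          congr 1
          rw [Finset.mul_sum, ← Finset.sum_sub_distrib]
          exact Finset.sum_congr rfl fun s _ => by ring
      _ = c t - c (t+1) := by rw [hinner]; simp only [hcdef]; ring
  -- summability facts
  have hsum_s : ∀ s : S, Summable (fun t => γ ^ t * μ t s * Δ s) := by
    intro s
    refine Summable.of_norm_bounded (hgeo.mul_left |Δ s|) fun t => ?_
    rw [Real.norm_eq_abs, abs_mul, abs_mul, abs_pow, abs_of_nonneg (le_of_lt hγ0),
      abs_of_nonneg (hμ0 t s)]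
    nlinarith [mul_nonneg (mul_nonneg (hγt0 t) (sub_nonneg.2 (hμ1 t s))) (abs_nonneg (Δ s))]
  have htel : Summable (fun t => c t - c (t+1)) := by
    refine Summable.of_norm_bounded (hgeo.mul_left (G * (1 + γ))) fun t => ?_
    rw [Real.norm_eq_abs]
    have h1 := hcbd t
    have h2 := hcbd (t+1)
    have h3 : |c t - c (t+1)| ≤ |c t| + |c (t+1)| := by
      calc |c t - c (t+1)| = |c t + -(c (t+1))| := by rw [sub_eq_add_neg]
        _ ≤ |c t| + |-(c (t+1))| := abs_add_le _ _
        _ = |c t| + |c (t+1)| := by rw [abs_neg]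
    have h4 : γ ^ (t+1) = γ * γ ^ t := by ring
    nlinarith [hγt0 t]
  have hczero : Tendsto c atTop (nhds 0) := by
    refine squeeze_zero_norm (fun t => hcbd t) ?_
    have := (tendsto_pow_atTop_nhds_zero_of_lt_one (le_of_lt hγ0) hγ1).const_mul G
    simpa using this
  have hc0 : ∑' t, (c t - c (t+1)) = c 0 := by
    have h1 := htel.hasSum.tendsto_sum_nat
    have h2 : Tendsto (fun n => ∑ i ∈ Finset.range n, (c i - c (i+1))) atTop (nhds (c 0)) := by
      simp only [Finset.sum_range_sub']
      simpa using hczero.const_sub (c 0)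
    exact tendsto_nhds_unique h1 h2
  have hc0' : c 0 = ∑ s, ρ s * g s := by
    simp [hcdef, hμdef]
  have hLHS : (∑ s, ρ s * Vstar s) - ∑ s, ρ s * Vπ s = ∑ s, ρ s * g s := by
    simp only [hgdef, mul_sub, Finset.sum_sub_distrib]
  have hd : ∀ s, dOcc P γ ρ πstar s = (1 - γ) * ∑' t, γ ^ t * μ t s := fun s => rfl
  have hgoalΔ : ∀ s : S, (∑ a, πstar s a * Qval P r γ Vπ s a)
      - lam * fDiv f (πstar s) (pref s) - Vπ s = Δ s := fun s => rfl
  rw [hLHS]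
  calc ∑ s, ρ s * g s
      = c 0 := hc0'.symm
    _ = ∑' t, (c t - c (t+1)) := hc0.symm
    _ = ∑' t, ∑ s, γ ^ t * μ t s * Δ s := (tsum_congr fun t => hkey t).symm
    _ = ∑ s, ∑' t, γ ^ t * μ t s * Δ s := Summable.tsum_finsetSum fun s _ => hsum_s s
    _ = ∑ s, (∑' t, γ ^ t * μ t s) * Δ s := by
        refine Finset.sum_congr rfl fun s _ => ?_
        rw [← tsum_mul_right]
    _ = (1 / (1 - γ)) * ∑ s, dOcc P γ ρ πstar s *
          ((∑ a, πstar s a * Qval P r γ Vπ s a) -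
            lam * fDiv f (πstar s) (pref s) - Vπ s) := by
        simp only [hgoalΔ]
        have hrw : ∀ s : S, dOcc P γ ρ πstar s * Δ s
            = (1 - γ) * ((∑' t, γ ^ t * μ t s) * Δ s) := fun s => by rw [hd s]; ring
        rw [Finset.sum_congr rfl fun s _ => hrw s, ← Finset.mul_sum, ← mul_assoc, one_div,
          inv_mul_cancel₀ hγpos.ne', one_mul]


end
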